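/- The bounded self-adjoint operators B^sa form an open subset of the space of self-adjoint operators C^sa with the graph metric d_G: if T ∈ B^sa with ‖T‖ ≤ R and T̃ ∈ C^sa satisfies d_G(T,T̃) < (1/2)(1+R)^{-1}, then T̃ is bounded. Moreover on B^sa the graph metric induces the norm topology; quantitatively, ‖T−T̃‖ ≤ 2(1+R)² d_G(T,T̃) and d_G(T,T̃) ≤ 2‖T−T̃‖ when ‖T−T̃‖ < 1/2. -/

import Mathlib

open Complex Set MeasureTheory Filter Topology

noncomputable section

/-- A (possibly unbounded) self-adjoint operator on `H`, encoded together with its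
Borel functional calculus: `op` is the operator itself (a densely defined symmetric
partial linear map), `phi` is the Borel functional calculus `f ↦ f(op)`, a star algebra
homomorphism from bounded Borel functions (encoded as arbitrary functions `ℝ → ℂ`;
`phi` is only used on bounded functions) into bounded operators, contractive with
respect to the sup norm, and compatible with `op` in the sense that
`phi (fun t => (t+i)⁻¹)` is the resolvent `(op + i)⁻¹`. -/
structure SAOp (H : Type*) [NormedAddCommGroup H] [InnerProductSpace ℂ H]
    [CompleteSpace H] where
  op : H →ₗ.[ℂ] H
  dense_dom : Dense (op.domain : Set H)
  symm : ∀ x y : op.domain, (inner ℂ (op x) (y : H) : ℂ) = inner ℂ (x : H) (op y)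
  phi : (ℝ → ℂ) →⋆ₐ[ℂ] (H →L[ℂ] H)
  norm_le : ∀ (f : ℝ → ℂ) (C : ℝ), 0 ≤ C → (∀ x, ‖f x‖ ≤ C) → ‖phi f‖ ≤ C
  res_mem : ∀ x : H, phi (fun t => ((t : ℂ) + Complex.I)⁻¹) x ∈ op.domain
  op_res_add : ∀ x : H,
    op ⟨phi (fun t => ((t : ℂ) + Complex.I)⁻¹) x, res_mem x⟩
      + Complex.I • phi (fun t => ((t : ℂ) + Complex.I)⁻¹) x = x
  res_op : ∀ y : op.domain,
    phi (fun t => ((t : ℂ) + Complex.I)⁻¹) (op y + Complex.I • (y : H)) = (y : H)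

namespace SAOp

variable {H : Type*} [NormedAddCommGroup H] [InnerProductSpace ℂ H] [CompleteSpace H]

/-- The resolvent `(T + i)⁻¹`. -/
def res (T : SAOp H) : H →L[ℂ] H := T.phi (fun t => ((t : ℂ) + Complex.I)⁻¹)

/-- The Riesz transform `F(T) = T (I + T²)^{-1/2}`. -/
def rieszF (T : SAOp H) : H →L[ℂ] H :=
  T.phi (fun t => (t : ℂ) / ((Real.sqrt (1 + t ^ 2) : ℝ) : ℂ))

/-- `(I + T²)⁻¹`. -/
def invOnePlusSq (T : SAOp H) : H →L[ℂ] H :=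
  T.phi (fun t => (((1 + t ^ 2 : ℝ)) : ℂ)⁻¹)

/-- `(I + T²)^{-1/2} = |T + i|⁻¹`. -/
def invSqrt (T : SAOp H) : H →L[ℂ] H :=
  T.phi (fun t => ((Real.sqrt (1 + t ^ 2) : ℝ) : ℂ)⁻¹)

/-- The spectral projection `1_{(l,∞)}(T)`. -/
def specProjGt (T : SAOp H) (l : ℝ) : H →L[ℂ] H :=
  T.phi (Set.indicator (Set.Ioi l) 1)

/-- The spectral projection `1_{[l,∞)}(T)`. -/
def specProjGe (T : SAOp H) (l : ℝ) : H →L[ℂ] H :=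
  T.phi (Set.indicator (Set.Ici l) 1)

/-- The spectrum of `T` does not meet `s`. -/
def Avoids (T : SAOp H) (s : Set ℝ) : Prop := T.phi (Set.indicator s 1) = 0

/-- `T` is a self-adjoint Fredholm operator: `0` is not in the essential spectrum,
i.e. some spectral projection `1_{(-ε,ε)}(T)` has finite rank. -/
def IsFredholm (T : SAOp H) : Prop :=
  ∃ ε > (0 : ℝ), FiniteDimensional ℂ
    (LinearMap.range ((T.phi (Set.indicator (Set.Ioo (-ε) ε) 1) : H →L[ℂ] H) : H →ₗ[ℂ] H))

end SAOp

/-- `P` is an orthogonal projection. -/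
def IsOrthoProj {H : Type*} [NormedAddCommGroup H] [InnerProductSpace ℂ H]
    [CompleteSpace H] (P : H →L[ℂ] H) : Prop :=
  IsSelfAdjoint P ∧ IsIdempotentElem P

/-- A linear map is Fredholm if its kernel and cokernel are finite dimensional. -/
def IsFredholmLM {M N : Type*} [AddCommGroup M] [Module ℂ M] [AddCommGroup N]
    [Module ℂ N] (f : M →ₗ[ℂ] N) : Prop :=
  FiniteDimensional ℂ (LinearMap.ker f) ∧ FiniteDimensional ℂ (N ⧸ LinearMap.range f)

/-- The Fredholm index of a linear map: `dim ker − dim coker`. -/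
noncomputable def indexLM {M N : Type*} [AddCommGroup M] [Module ℂ M] [AddCommGroup N]
    [Module ℂ N] (f : M →ₗ[ℂ] N) : ℤ :=
  (Module.finrank ℂ (LinearMap.ker f) : ℤ) -
    (Module.finrank ℂ (N ⧸ LinearMap.range f) : ℤ)

/-- For projections `P Q`, the operator `Q : ran P → ran Q`. -/
noncomputable def pairRestrict {H : Type*} [NormedAddCommGroup H]
    [InnerProductSpace ℂ H] (P Q : H →L[ℂ] H) :
    (LinearMap.range (P : H →ₗ[ℂ] H)) →ₗ[ℂ] (LinearMap.range (Q : H →ₗ[ℂ] H)) :=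
  (Q : H →ₗ[ℂ] H).restrict (fun x _ => LinearMap.mem_range_self _ x)

/-- `(P,Q)` is a Fredholm pair of projections. -/
def IsFredholmPair {H : Type*} [NormedAddCommGroup H] [InnerProductSpace ℂ H]
    (P Q : H →L[ℂ] H) : Prop := IsFredholmLM (pairRestrict P Q)

/-- The index `ind(P,Q)` of a pair of projections. -/
noncomputable def pairIndex {H : Type*} [NormedAddCommGroup H]
    [InnerProductSpace ℂ H] (P Q : H →L[ℂ] H) : ℤ := indexLM (pairRestrict P Q)


section Aux

variable {H : Type*} [NormedAddCommGroup H] [InnerProductSpace ℂ H] [CompleteSpace H]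

lemma SAOp.norm_res_le_one (T : SAOp H) : ‖T.res‖ ≤ 1 := by
  refine T.norm_le _ 1 one_pos.le fun t => ?_
  rw [norm_inv]
  have h2 : (1:ℝ) ≤ ‖(t:ℂ) + Complex.I‖ := by
    have h3 : ‖(t:ℂ) + Complex.I‖^2 = t^2 + 1 := by
      rw [Complex.sq_norm]
      simp [Complex.normSq_apply, sq]
    nlinarith [norm_nonneg ((t:ℂ) + Complex.I), sq_nonneg t]
  exact inv_le_one_of_one_le₀ h2

lemma SAOp.mul_res_eq_one (T : SAOp H) (Tb : H →L[ℂ] H) (hTdom : T.op.domain = ⊤)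
    (hTb : ∀ (x : H) (hx : x ∈ T.op.domain), T.op ⟨x, hx⟩ = Tb x) :
    (Tb + Complex.I • (1 : H →L[ℂ] H)) * T.res = 1 := by
  ext x
  have h := T.op_res_add x
  rw [hTb] at h
  simpa [SAOp.res, ContinuousLinearMap.mul_apply] using h

lemma SAOp.res_mul_eq_one (T : SAOp H) (Tb : H →L[ℂ] H) (hTdom : T.op.domain = ⊤)
    (hTb : ∀ (x : H) (hx : x ∈ T.op.domain), T.op ⟨x, hx⟩ = Tb x) :
    T.res * (Tb + Complex.I • (1 : H →L[ℂ] H)) = 1 := by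
  ext x
  have hx : x ∈ T.op.domain := by rw [hTdom]; trivial
  have h := T.res_op ⟨x, hx⟩
  rw [hTb] at h
  simpa [SAOp.res, ContinuousLinearMap.mul_apply] using h

end Aux

/-- the bounded self-adjoint operators are open in `(𝒞^sa, d_G)` and
on them the graph metric induces the norm topology. Quantitatively: if `T` is
bounded self-adjoint with `‖T‖ ≤ R` and `d_G(T,T̃) < (1/2)(1+R)⁻¹` then `T̃` is
bounded with `‖T - T̃‖ ≤ 2(1+R)² d_G(T,T̃)`; conversely if `T̃` is bounded with
`‖T - T̃‖ < 1/2` then `d_G(T,T̃) ≤ 2‖T - T̃‖`. -/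
theorem statement15 {H : Type*} [NormedAddCommGroup H] [InnerProductSpace ℂ H]
    [CompleteSpace H] (T T' : SAOp H) (Tb : H →L[ℂ] H) (R : ℝ)
    (hTdom : T.op.domain = ⊤)
    (hTb : ∀ (x : H) (hx : x ∈ T.op.domain), T.op ⟨x, hx⟩ = Tb x)
    (hR : ‖Tb‖ ≤ R) :
    (‖T.res - T'.res‖ < 1 / 2 * (1 + R)⁻¹ →
      ∃ B : H →L[ℂ] H, T'.op.domain = ⊤ ∧
        (∀ (x : H) (hx : x ∈ T'.op.domain), T'.op ⟨x, hx⟩ = B x) ∧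
        ‖Tb - B‖ ≤ 2 * (1 + R) ^ 2 * ‖T.res - T'.res‖) ∧
    (∀ B : H →L[ℂ] H, T'.op.domain = ⊤ →
      (∀ (x : H) (hx : x ∈ T'.op.domain), T'.op ⟨x, hx⟩ = B x) →
      ‖Tb - B‖ < 1 / 2 → ‖T.res - T'.res‖ ≤ 2 * ‖Tb - B‖) := by
  classical
  have hA1 : (Tb + Complex.I • (1 : H →L[ℂ] H)) * T.res = 1 :=
    SAOp.mul_res_eq_one T Tb hTdom hTb
  have hA2 : T.res * (Tb + Complex.I • (1 : H →L[ℂ] H)) = 1 :=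
    SAOp.res_mul_eq_one T Tb hTdom hTb
  have hresT : ‖T.res‖ ≤ 1 := T.norm_res_le_one
  have hR0 : (0:ℝ) ≤ R := le_trans (norm_nonneg Tb) hR
  set A := Tb + Complex.I • (1 : H →L[ℂ] H) with hAdef
  have hAnorm : ‖A‖ ≤ 1 + R := by
    have h1 : ‖Complex.I • (1 : H →L[ℂ] H)‖ ≤ 1 := by
      rw [norm_smul, Complex.norm_I, one_mul]
      exact ContinuousLinearMap.norm_id_le
    calc ‖A‖ ≤ ‖Tb‖ + ‖Complex.I • (1 : H →L[ℂ] H)‖ := norm_add_le _ _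
      _ ≤ 1 + R := by linarith
  constructor
  · intro hd
    set D := T.res - T'.res with hD
    set K := A * D with hK
    have hKn : ‖K‖ ≤ (1 + R) * ‖D‖ := by
      calc ‖K‖ ≤ ‖A‖ * ‖D‖ := norm_mul_le _ _
        _ ≤ (1 + R) * ‖D‖ := mul_le_mul_of_nonneg_right hAnorm (norm_nonneg _)
    have hKhalf : ‖K‖ < 1/2 := by
      have h1R : (0:ℝ) < 1 + R := by linarith
      calc ‖K‖ ≤ (1 + R) * ‖D‖ := hKn
        _ < (1 + R) * (1 / 2 * (1 + R)⁻¹) := by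
            exact mul_lt_mul_of_pos_left hd h1R
        _ = 1/2 := by field_simp
    have hK1 : ‖K‖ < 1 := lt_trans hKhalf (by norm_num)
    set u : (H →L[ℂ] H)ˣ := Units.oneSub K hK1 with hu
    have huval : (↑u : H →L[ℂ] H) = 1 - K := rfl
    have hres' : T'.res = T.res * ↑u := by
      rw [huval, mul_sub, mul_one, hK, ← mul_assoc, hA2, one_mul, hD]
      abel
    set S := (↑u⁻¹ : H →L[ℂ] H) * A with hS
    have hSres : S * T'.res = 1 := by
      rw [hres', hS, mul_assoc, ← mul_assoc A, hA1, one_mul, Units.inv_mul]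
    have hresS : T'.res * S = 1 := by
      rw [hres', hS, mul_assoc, ← mul_assoc (↑u : H →L[ℂ] H), Units.mul_inv, one_mul, hA2]
    have hresSx : ∀ x : H,
        T'.phi (fun t => ((t : ℂ) + Complex.I)⁻¹) (S x) = x := by
      intro x
      have h := DFunLike.congr_fun hresS x
      simpa [ContinuousLinearMap.mul_apply, SAOp.res] using h
    have hdom' : T'.op.domain = ⊤ := by
      rw [eq_top_iff]
      intro x _
      have hm : T'.phi (fun t => ((t : ℂ) + Complex.I)⁻¹) (S x) ∈ T'.op.domain :=
        T'.res_mem (S x)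
      rwa [hresSx x] at hm
    refine ⟨S - Complex.I • (1 : H →L[ℂ] H), hdom', ?_, ?_⟩
    · intro x hx
      have h := T'.op_res_add (S x)
      have hsub : (⟨T'.phi (fun t => ((t : ℂ) + Complex.I)⁻¹) (S x),
          T'.res_mem (S x)⟩ : T'.op.domain) = ⟨x, hx⟩ := Subtype.ext (hresSx x)
      rw [hsub, hresSx x] at h
      have h2 : T'.op ⟨x, hx⟩ = S x - Complex.I • x := eq_sub_of_add_eq h
      simp [h2, ContinuousLinearMap.sub_apply, ContinuousLinearMap.smul_apply]
    · have hiu : ‖(↑u⁻¹ : H →L[ℂ] H)‖ ≤ 2 := by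
        have hid : (↑u⁻¹ : H →L[ℂ] H) = 1 + ↑u⁻¹ * K := by
          have h4 := u.inv_mul
          rw [huval, mul_sub, mul_one] at h4
          rw [← h4]; abel
        have h5 : ‖(↑u⁻¹ : H →L[ℂ] H)‖ ≤ 1 + ‖(↑u⁻¹ : H →L[ℂ] H)‖ * ‖K‖ := by
          calc ‖(↑u⁻¹ : H →L[ℂ] H)‖ = ‖(1 : H →L[ℂ] H) + ↑u⁻¹ * K‖ := by rw [← hid]
            _ ≤ ‖(1 : H →L[ℂ] H)‖ + ‖(↑u⁻¹ : H →L[ℂ] H) * K‖ := norm_add_le _ _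
            _ ≤ 1 + ‖(↑u⁻¹ : H →L[ℂ] H)‖ * ‖K‖ := by
                have := norm_mul_le (↑u⁻¹ : H →L[ℂ] H) K
                have h1 : ‖(1 : H →L[ℂ] H)‖ ≤ 1 := ContinuousLinearMap.norm_id_le
                linarith
        nlinarith [norm_nonneg (↑u⁻¹ : H →L[ℂ] H), norm_nonneg K]
      have hTbB : Tb - (S - Complex.I • (1 : H →L[ℂ] H)) = -(K * ↑u⁻¹) * A := by
        have h1 : Tb - (S - Complex.I • (1 : H →L[ℂ] H)) = A - S := by
          rw [hAdef]; abel
        have h3 : (1 : H →L[ℂ] H) - ↑u⁻¹ = -(K * ↑u⁻¹) := by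
          have h4 := u.mul_inv
          rw [huval, sub_mul, one_mul] at h4
          rw [← h4]; abel
        rw [h1, hS, ← one_mul (A : H →L[ℂ] H), ← mul_assoc, mul_one, ← sub_mul, h3, one_mul]
      rw [hTbB]
      have hno : ‖(-(K * ↑u⁻¹) * A : H →L[ℂ] H)‖ ≤ ‖K‖ * ‖(↑u⁻¹ : H →L[ℂ] H)‖ * ‖A‖ := by
        calc ‖(-(K * ↑u⁻¹) * A : H →L[ℂ] H)‖ ≤ ‖(-(K * ↑u⁻¹) : H →L[ℂ] H)‖ * ‖A‖ :=
              norm_mul_le _ _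
          _ = ‖(K * ↑u⁻¹ : H →L[ℂ] H)‖ * ‖A‖ := by rw [norm_neg]
          _ ≤ ‖K‖ * ‖(↑u⁻¹ : H →L[ℂ] H)‖ * ‖A‖ :=
              mul_le_mul_of_nonneg_right (norm_mul_le _ _) (norm_nonneg _)
      have hiunn : (0:ℝ) ≤ ‖(↑u⁻¹ : H →L[ℂ] H)‖ := norm_nonneg _
      have hstep1 : ‖K‖ * ‖(↑u⁻¹ : H →L[ℂ] H)‖ ≤ (1 + R) * ‖D‖ * 2 :=
        mul_le_mul hKn hiu hiunn (by positivity)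
      have hstep2 : ‖K‖ * ‖(↑u⁻¹ : H →L[ℂ] H)‖ * ‖A‖ ≤ (1 + R) * ‖D‖ * 2 * (1 + R) :=
        mul_le_mul hstep1 hAnorm (norm_nonneg _) (by positivity)
      have : ‖T.res - T'.res‖ = ‖D‖ := by rw [hD]
      rw [this]
      calc ‖(-(K * ↑u⁻¹) * A : H →L[ℂ] H)‖ ≤ ‖K‖ * ‖(↑u⁻¹ : H →L[ℂ] H)‖ * ‖A‖ := hno
        _ ≤ (1 + R) * ‖D‖ * 2 * (1 + R) := hstep2
        _ = 2 * (1 + R) ^ 2 * ‖D‖ := by ring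
  · intro B hdom' hBeq hBnorm
    have hB1 : (B + Complex.I • (1 : H →L[ℂ] H)) * T'.res = 1 :=
      SAOp.mul_res_eq_one T' B hdom' hBeq
    have hresT' : ‖T'.res‖ ≤ 1 := T'.norm_res_le_one
    have key : T.res - T'.res = T.res * ((B - Tb) * T'.res) := by
      have h1 : (B - Tb : H →L[ℂ] H) = (B + Complex.I • (1 : H →L[ℂ] H)) - A := by
        rw [hAdef]; abel
      rw [h1, sub_mul, hB1, mul_sub, mul_one, ← mul_assoc, hA2, one_mul]
    have hnn : (0:ℝ) ≤ ‖Tb - B‖ := norm_nonneg _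
    calc ‖T.res - T'.res‖ = ‖T.res * ((B - Tb) * T'.res)‖ := by rw [key]
      _ ≤ ‖T.res‖ * ‖(B - Tb) * T'.res‖ := norm_mul_le _ _
      _ ≤ ‖T.res‖ * (‖B - Tb‖ * ‖T'.res‖) :=
          mul_le_mul_of_nonneg_left (norm_mul_le _ _) (norm_nonneg _)
      _ ≤ 1 * (‖B - Tb‖ * 1) := by
          apply mul_le_mul hresT _ (by positivity) one_pos.le
          exact mul_le_mul_of_nonneg_left hresT' (norm_nonneg _)
      _ = ‖Tb - B‖ := by rw [norm_sub_rev]; ring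
      _ ≤ 2 * ‖Tb - B‖ := by linarith
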